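/- For integers n ≥ 1 and 1 ≤ k ≤ n: ∑_{j=k}^n (1 - q^{n-2j}) · q^{j - n(n+1)/2} · [n+j choose n]_q · [2n-j choose n]_q = (1 - p^k) · p^{-n(n+1)/2} · [n+k choose n]_p · [2n+1-k choose n+1]_p, where p = 1/q. -/

import Mathlib

open Finset

/-- The q-Pochhammer symbol `(a;q)_m`. -/
noncomputable def qPoch {K : Type*} [Field K] (q a : K) (m : ℕ) : K :=
  ∏ i ∈ Finset.range m, (1 - a * q ^ i)

/-- The Gaussian (q-)binomial coefficient `[n choose k]_q`. -/
noncomputable def gbinom {K : Type*} [Field K] (q : K) (n k : ℕ) : K :=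
  qPoch q q n / (qPoch q q k * qPoch q q (n - k))

section Helpers
variable {K : Type*} [Field K]

lemma hfac {q : K} (hq : ∀ m : ℕ, 1 ≤ m → q ^ m ≠ 1) (m : ℕ) (hm : 1 ≤ m) :
    (1 : K) - q ^ m ≠ 0 := by
  intro h
  exact hq m hm (by linear_combination -h)

lemma P_succ (q : K) (m : ℕ) : qPoch q q (m+1) = qPoch q q m * (1 - q ^ (m+1)) := by
  rw [qPoch, Finset.prod_range_succ, ← qPoch, pow_succ']

lemma P_zero (q : K) : qPoch q q 0 = 1 := by simp [qPoch]

lemma P_ne {q : K} (hq : ∀ m : ℕ, 1 ≤ m → q ^ m ≠ 1) (m : ℕ) : qPoch q q m ≠ 0 := by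
  rw [qPoch]
  refine Finset.prod_ne_zero_iff.mpr fun i _ => ?_
  rw [← pow_succ']
  exact hfac hq (i+1) (by omega)

lemma gbinom_self {q : K} (hq : ∀ m : ℕ, 1 ≤ m → q ^ m ≠ 1) (m : ℕ) : gbinom q m m = 1 := by
  rw [gbinom, Nat.sub_self, P_zero, mul_one, div_self (P_ne hq m)]

lemma two_mul_tri (m : ℕ) : 2 * (m * (m + 1) / 2) = m * (m + 1) := by
  rw [Nat.two_mul_div_two_of_even]
  exact Nat.even_mul_succ_self m

lemma tri_add (a b : ℕ) :
    (a + b) * ((a + b) + 1) / 2 = a * (a + 1) / 2 + b * (b + 1) / 2 + a * b := by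
  have h := two_mul_tri (a + b)
  have ha := two_mul_tri a
  have hb := two_mul_tri b
  have key : (a + b) * ((a + b) + 1) = a * (a + 1) + b * (b + 1) + 2 * (a * b) := by ring
  linarith

lemma qPoch_inv {q : K} (hq0 : q ≠ 0) (m : ℕ) :
    qPoch q⁻¹ q⁻¹ m * q ^ (m * (m + 1) / 2) = (-1) ^ m * qPoch q q m := by
  induction m with
  | zero => simp [qPoch]
  | succ m ih =>
    have ht : (m + 1) * ((m + 1) + 1) / 2 = m * (m + 1) / 2 + (m + 1) := by
      have h1 := two_mul_tri (m + 1)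
      have h2 := two_mul_tri m
      have key : (m + 1) * ((m + 1) + 1) = m * (m + 1) + 2 * (m + 1) := by ring
      linarith
    rw [P_succ, P_succ, ht]
    have h1 : (1 - q⁻¹ ^ (m + 1)) * q ^ (m + 1) = -(1 - q ^ (m + 1)) := by
      rw [inv_pow, sub_mul, inv_mul_cancel₀ (pow_ne_zero _ hq0)]; ring
    calc qPoch q⁻¹ q⁻¹ m * (1 - q⁻¹ ^ (m+1)) * q ^ (m * (m+1) / 2 + (m+1))
        = (qPoch q⁻¹ q⁻¹ m * q ^ (m * (m+1) / 2)) * ((1 - q⁻¹ ^ (m+1)) * q ^ (m+1)) := by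
          rw [pow_add]; ring
      _ = (-1) ^ m * qPoch q q m * -(1 - q ^ (m+1)) := by rw [ih, h1]
      _ = (-1) ^ (m+1) * (qPoch q q m * (1 - q ^ (m+1))) := by ring

lemma gbinom_inv {q : K} (hq0 : q ≠ 0) (hq : ∀ m : ℕ, 1 ≤ m → q ^ m ≠ 1) (a b : ℕ) :
    gbinom q⁻¹ (a + b) a = gbinom q (a + b) a * (q ^ (a * b))⁻¹ := by
  have hq' : ∀ m : ℕ, 1 ≤ m → q⁻¹ ^ m ≠ 1 := by
    intro m hm h
    rw [inv_pow, inv_eq_one] at h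
    exact hq m hm h
  have hab := qPoch_inv hq0 (K := K) (a + b)
  have ha := qPoch_inv hq0 (K := K) a
  have hb := qPoch_inv hq0 (K := K) b
  rw [tri_add, pow_add, pow_add, pow_add] at hab
  rw [gbinom, gbinom, Nat.add_sub_cancel_left, ← div_eq_mul_inv, div_div,
    div_eq_div_iff (mul_ne_zero (P_ne hq' a) (P_ne hq' b))
      (mul_ne_zero (mul_ne_zero (P_ne hq a) (P_ne hq b)) (pow_ne_zero _ hq0))]
  apply mul_right_cancel₀ (b := q ^ (a * (a+1)/2) * q ^ (b * (b+1)/2))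
    (mul_ne_zero (pow_ne_zero _ hq0) (pow_ne_zero _ hq0))
  linear_combination (qPoch q q a * qPoch q q b) * hab
    - qPoch q q (a+b) * (qPoch q⁻¹ q⁻¹ b * q ^ (b*(b+1)/2)) * ha
    - qPoch q q (a+b) * ((-1) ^ a * qPoch q q a) * hb


lemma frac1 (A B C D E x y z c : K) (hC : C ≠ 0) (hD : D ≠ 0) (hE : E ≠ 0)
    (hx : x ≠ 0) (hy : y ≠ 0) (hz : z ≠ 0) :
    c * (A / (C * D)) * (B / (C * (E * y))) = A * B * (c * x * z) / (C^2 * D * E * (x * y * z)) := by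
  rw [mul_assoc, div_mul_div_comm, mul_div_assoc',
    div_eq_div_iff (mul_ne_zero (mul_ne_zero hC hD) (mul_ne_zero hC (mul_ne_zero hE hy)))
      (mul_ne_zero (mul_ne_zero (mul_ne_zero (pow_ne_zero 2 hC) hD) hE)
        (mul_ne_zero (mul_ne_zero hx hy) hz))]
  ring

lemma frac2 (A B C D E x y z w c : K) (hC : C ≠ 0) (hD : D ≠ 0) (hE : E ≠ 0)
    (hx : x ≠ 0) (hy : y ≠ 0) (hz : z ≠ 0) :
    c * (A * w / (C * (D * x))) * (B / (C * z * E)) = A * B * (c * w * y) / (C^2 * D * E * (x * y * z)) := by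
  rw [mul_assoc, div_mul_div_comm, mul_div_assoc',
    div_eq_div_iff (mul_ne_zero (mul_ne_zero hC (mul_ne_zero hD hx))
        (mul_ne_zero (mul_ne_zero hC hz) hE))
      (mul_ne_zero (mul_ne_zero (mul_ne_zero (pow_ne_zero 2 hC) hD) hE)
        (mul_ne_zero (mul_ne_zero hx hy) hz))]
  ring

lemma frac3 (A B C D E x y z w c : K) (hC : C ≠ 0) (hD : D ≠ 0) (hE : E ≠ 0)
    (hx : x ≠ 0) (hy : y ≠ 0) (hz : z ≠ 0) :
    c * (A / (C * D)) * (B * w / ((C * z) * (E * y))) = A * B * (c * w * x) / (C^2 * D * E * (x * y * z)) := by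
  rw [mul_assoc, div_mul_div_comm, mul_div_assoc',
    div_eq_div_iff (mul_ne_zero (mul_ne_zero hC hD)
        (mul_ne_zero (mul_ne_zero hC hz) (mul_ne_zero hE hy)))
      (mul_ne_zero (mul_ne_zero (mul_ne_zero (pow_ne_zero 2 hC) hD) hE)
        (mul_ne_zero (mul_ne_zero hx hy) hz))]
  ring

lemma key {q : K} (hq : ∀ m : ℕ, 1 ≤ m → q ^ m ≠ 1) (n : ℕ) :
    ∀ k, 1 ≤ k → k ≤ n →
      ∑ j ∈ Finset.Icc k n, (q ^ j - q ^ (n - j)) * gbinom q (n + j) n * gbinom q (2 * n - j) n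
        = (q ^ k - 1) * gbinom q (n + k) n * gbinom q (2 * n + 1 - k) (n + 1) := by
  suffices h : ∀ d k, 1 ≤ k → k ≤ n → n - k = d →
      ∑ j ∈ Finset.Icc k n, (q ^ j - q ^ (n - j)) * gbinom q (n + j) n * gbinom q (2 * n - j) n
        = (q ^ k - 1) * gbinom q (n + k) n * gbinom q (2 * n + 1 - k) (n + 1) by
    exact fun k hk hkn => h (n - k) k hk hkn rfl
  intro d
  induction d with
  | zero =>
    intro k hk hkn h0
    have hkn' : k = n := by omega
    subst hkn'
    rw [Finset.Icc_self, Finset.sum_singleton, Nat.sub_self, pow_zero,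
      show 2 * k - k = k by omega, show 2 * k + 1 - k = k + 1 by omega,
      gbinom_self hq, gbinom_self hq]
  | succ d ih =>
    intro k hk hkn hd1
    have hk1n : k + 1 ≤ n := by omega
    rw [Finset.Icc_eq_cons_Ioc hkn, Finset.sum_cons, ← Finset.Icc_add_one_left_eq_Ioc,
      ih (k+1) (by omega) hk1n (by omega)]
    have hn : n = k + (d + 1) := by omega
    subst hn
    rw [show k + (d+1) + k = 2*k+d+1 by omega,
      show 2 * (k + (d+1)) - k = k+2*d+2 by omega,
      show k + (d+1) + (k+1) = (2*k+d+1)+1 by omega,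
      show 2 * (k + (d+1)) + 1 - (k+1) = k+2*d+2 by omega,
      show 2 * (k + (d+1)) + 1 - k = (k+2*d+2)+1 by omega,
      show k + (d+1) + 1 = (k+d+1)+1 by omega,
      show k + (d+1) - k = d+1 by omega,
      show k + (d+1) = k+d+1 by omega]
    have n1 := P_ne hq (2*k+d+1)
    have n2 := P_ne hq (k+2*d+2)
    have n3 := P_ne hq (k+d+1)
    have n4 := P_ne hq k
    have n5 := P_ne hq d
    have f1 := hfac hq (2*k+d+1+1) (by omega)
    have f2 := hfac hq (k+2*d+2+1) (by omega)
    have f3 := hfac hq (k+d+1+1) (by omega)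
    have f4 := hfac hq (k+1) (by omega)
    have f5 := hfac hq (d+1) (by omega)
    have h1 : (q^k - q^(d+1)) * gbinom q (2*k+d+1) (k+d+1) * gbinom q (k+2*d+2) (k+d+1)
        = qPoch q q (2*k+d+1) * qPoch q q (k+2*d+2)
            * ((q^k - q^(d+1)) * (1-q^(k+1)) * (1-q^(k+d+1+1)))
          / (qPoch q q (k+d+1)^2 * qPoch q q k * qPoch q q d
            * ((1-q^(k+1)) * (1-q^(d+1)) * (1-q^(k+d+1+1)))) := by
      rw [gbinom, gbinom, show 2*k+d+1 - (k+d+1) = k by omega,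
        show k+2*d+2 - (k+d+1) = d+1 by omega, P_succ q d]
      exact frac1 _ _ _ _ _ _ _ _ _ n3 n4 n5 f4 f5 f3
    have h2 : (q^(k+1) - 1) * gbinom q ((2*k+d+1)+1) (k+d+1) * gbinom q (k+2*d+2) ((k+d+1)+1)
        = qPoch q q (2*k+d+1) * qPoch q q (k+2*d+2)
            * ((q^(k+1) - 1) * (1-q^(2*k+d+1+1)) * (1-q^(d+1)))
          / (qPoch q q (k+d+1)^2 * qPoch q q k * qPoch q q d
            * ((1-q^(k+1)) * (1-q^(d+1)) * (1-q^(k+d+1+1)))) := by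
      rw [gbinom, gbinom, show (2*k+d+1)+1 - (k+d+1) = k+1 by omega,
        show k+2*d+2 - ((k+d+1)+1) = d by omega, P_succ q (2*k+d+1), P_succ q k,
        P_succ q (k+d+1)]
      exact frac2 _ _ _ _ _ _ _ _ _ _ n3 n4 n5 f4 f5 f3
    have h3 : (q^k - 1) * gbinom q (2*k+d+1) (k+d+1) * gbinom q ((k+2*d+2)+1) ((k+d+1)+1)
        = qPoch q q (2*k+d+1) * qPoch q q (k+2*d+2)
            * ((q^k - 1) * (1-q^(k+2*d+2+1)) * (1-q^(k+1)))
          / (qPoch q q (k+d+1)^2 * qPoch q q k * qPoch q q d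
            * ((1-q^(k+1)) * (1-q^(d+1)) * (1-q^(k+d+1+1)))) := by
      rw [gbinom, gbinom, show 2*k+d+1 - (k+d+1) = k by omega,
        show (k+2*d+2)+1 - ((k+d+1)+1) = d+1 by omega, P_succ q (k+2*d+2),
        P_succ q (k+d+1), P_succ q d]
      exact frac3 _ _ _ _ _ _ _ _ _ _ n3 n4 n5 f4 f5 f3
    rw [h1, h2, h3, ← add_div]
    congr 1
    ring
end Helpers

/-- a finite very-well-poised q-binomial identity with `p = q⁻¹`. -/
theorem stmt2 {K : Type*} [Field K] (q : K) (hq0 : q ≠ 0)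
    (hq : ∀ m : ℕ, 1 ≤ m → q ^ m ≠ 1)
    (n k : ℕ) (hk : 1 ≤ k) (hkn : k ≤ n) :
    ∑ j ∈ Finset.Icc k n,
        (1 - q ^ ((n : ℤ) - 2 * j)) * q ^ ((j : ℤ) - (n * (n + 1) / 2 : ℕ))
          * gbinom q (n + j) n * gbinom q (2 * n - j) n
      = (1 - q⁻¹ ^ (k : ℤ)) * q⁻¹ ^ (-((n * (n + 1) / 2 : ℕ) : ℤ))
        * gbinom q⁻¹ (n + k) n * gbinom q⁻¹ (2 * n + 1 - k) (n + 1) := by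
  have hL : ∀ j ∈ Finset.Icc k n,
      (1 - q ^ ((n : ℤ) - 2 * j)) * q ^ ((j : ℤ) - (n * (n + 1) / 2 : ℕ))
          * gbinom q (n + j) n * gbinom q (2 * n - j) n
        = (q ^ (n * (n + 1) / 2))⁻¹
            * ((q ^ j - q ^ (n - j)) * gbinom q (n + j) n * gbinom q (2 * n - j) n) := by
    intro j hj
    rw [Finset.mem_Icc] at hj
    have c1 : q ^ ((j:ℤ) - (n * (n + 1) / 2 : ℕ)) = q ^ j * (q ^ (n * (n + 1) / 2))⁻¹ := by
      rw [zpow_sub₀ hq0, zpow_natCast, zpow_natCast, div_eq_mul_inv]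
    have c2 : q ^ ((n:ℤ) - 2*j) * q ^ ((j:ℤ) - (n * (n + 1) / 2 : ℕ))
        = q ^ (n - j) * (q ^ (n * (n + 1) / 2))⁻¹ := by
      rw [← zpow_add₀ hq0,
        show (n:ℤ) - 2*j + ((j:ℤ) - (n * (n + 1) / 2 : ℕ)) = ((n - j : ℕ) : ℤ) - (n * (n + 1) / 2 : ℕ) by
          push_cast [Nat.cast_sub hj.2]; ring,
        zpow_sub₀ hq0, zpow_natCast, zpow_natCast, div_eq_mul_inv]
    calc (1 - q ^ ((n:ℤ) - 2*j)) * q ^ ((j:ℤ) - (n*(n+1)/2 : ℕ)) * gbinom q (n+j) n * gbinom q (2*n-j) n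
        = (q ^ ((j:ℤ) - (n*(n+1)/2:ℕ)) - q ^ ((n:ℤ) - 2*j) * q ^ ((j:ℤ) - (n*(n+1)/2:ℕ)))
            * gbinom q (n+j) n * gbinom q (2*n-j) n := by ring
      _ = (q^j * (q ^ (n*(n+1)/2))⁻¹ - q^(n-j) * (q ^ (n*(n+1)/2))⁻¹)
            * gbinom q (n+j) n * gbinom q (2*n-j) n := by rw [c2, c1]
      _ = (q ^ (n*(n+1)/2))⁻¹ * ((q^j - q^(n-j)) * gbinom q (n+j) n * gbinom q (2*n-j) n) := by ring
  rw [Finset.sum_congr rfl hL, ← Finset.mul_sum, key hq n k hk hkn,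
    show (2*n+1-k) = (n+1)+(n-k) by omega,
    gbinom_inv hq0 hq n k, gbinom_inv hq0 hq (n+1) (n-k),
    inv_zpow, zpow_natCast, zpow_neg, inv_zpow, inv_inv, zpow_natCast]
  have hexp : n*(n+1)/2 + n*(n+1)/2 = n*k + (n+1)*(n-k) + k := by
    have harith : n*k + (n+1)*(n-k) + k = n*(n+1) := by
      obtain ⟨c, rfl⟩ : ∃ c, n = k + c := ⟨n - k, by omega⟩
      rw [show k + c - k = c by omega]
      ring
    have h2 := two_mul_tri n
    omega
  have epow : q ^ (n*(n+1)/2) * q ^ (n*(n+1)/2) = q ^ (n*k) * q ^ ((n+1)*(n-k)) * q ^ k := by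
    rw [← pow_add, ← pow_add, ← pow_add]
    exact congrArg (q ^ ·) hexp
  have pne : ∀ m : ℕ, q ^ m ≠ 0 := fun m => pow_ne_zero m hq0
  field_simp
  linear_combination (-((q ^ k - 1) * gbinom q (n + k) n * gbinom q (n + 1 + (n - k)) (n + 1))) * epow
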